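/- Let X be a finite subset of edges of a square Λ in ℤ² that contains no edge touching the boundary layer (disordered boundary condition). Then 2·|B(Λ)∖X| = 4·κ₀(S(Λ),X) + Σ_{γ∈∂_X} |γ| − |∂̄B(Λ)|, where κ₀(S(Λ),X) is the number of vertices of Λ incident to no edge of X, ∂_X is the contour family of X (the set of incident pairs (i,b) with i a vertex touching X and b ∉ X a missing edge incident to i), and ∂̄B(Λ) = {(i,b) : i ∈ S(Λ), b ∉ B(Λ), i incident to b}. -/

import Mathlib

/-- nearest-neighbour adjacency on the square lattice ℤ². -/
def latAdj (v w : ℤ × ℤ) : Prop :=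
  (v.1 = w.1 ∧ (v.2 - w.2).natAbs = 1) ∨ (v.2 = w.2 ∧ (v.1 - w.1).natAbs = 1)

/-- `e` is a bond of the lattice ℤ². -/
def isBond (e : Sym2 (ℤ × ℤ)) : Prop := ∃ v w, latAdj v w ∧ e = s(v, w)

/-- the vertex set `S(Λ_n)` of the `(2n+1)×(2n+1)` central square. -/
def latSq (n : ℕ) : Set (ℤ × ℤ) := {v | |v.1| ≤ (n : ℤ) ∧ |v.2| ≤ (n : ℤ)}

/-- the bond set `B(Λ_n)`: bonds with both endpoints in `S(Λ_n)`. -/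
def bonds (n : ℕ) : Set (Sym2 (ℤ × ℤ)) := {e | isBond e ∧ ∀ v ∈ e, v ∈ latSq n}

lemma latAdj_ne {v w : ℤ × ℤ} (h : latAdj v w) : v ≠ w := by
  rintro rfl
  rcases h with ⟨_, h⟩ | ⟨_, h⟩ <;> omega

lemma latAdj_symm {v w : ℤ × ℤ} (h : latAdj v w) : latAdj w v := by
  rcases h with ⟨h1, h2⟩ | ⟨h1, h2⟩
  · exact Or.inl ⟨h1.symm, by omega⟩
  · exact Or.inr ⟨h1.symm, by omega⟩

lemma mem_bond_endpoints {b : Sym2 (ℤ × ℤ)} (hb : isBond b) :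
    ∃ v w : ℤ × ℤ, v ≠ w ∧ {i : ℤ × ℤ | i ∈ b} = {v, w} := by
  obtain ⟨v, w, hadj, rfl⟩ := hb
  exact ⟨v, w, latAdj_ne hadj, by ext i; simp⟩

lemma slice_eq (b : Sym2 (ℤ × ℤ)) :
    {p : (ℤ × ℤ) × Sym2 (ℤ × ℤ) | p.2 = b ∧ p.1 ∈ p.2} =
      (fun i => (i, b)) '' {i : ℤ × ℤ | i ∈ b} := by
  ext ⟨x, y⟩
  constructor
  · rintro ⟨rfl, h⟩; exact ⟨x, h, rfl⟩
  · rintro ⟨i, hi, h⟩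
    cases h
    exact ⟨rfl, hi⟩

lemma slice_finite {b : Sym2 (ℤ × ℤ)} (hb : isBond b) :
    {p : (ℤ × ℤ) × Sym2 (ℤ × ℤ) | p.2 = b ∧ p.1 ∈ p.2}.Finite := by
  obtain ⟨v, w, -, hvw⟩ := mem_bond_endpoints hb
  rw [slice_eq, hvw]
  exact ((Set.finite_singleton _).insert _).image _

lemma slice_ncard {b : Sym2 (ℤ × ℤ)} (hb : isBond b) :
    {p : (ℤ × ℤ) × Sym2 (ℤ × ℤ) | p.2 = b ∧ p.1 ∈ p.2}.ncard = 2 := by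
  obtain ⟨v, w, hne, hvw⟩ := mem_bond_endpoints hb
  rw [slice_eq, hvw, Set.ncard_image_of_injective _ (fun a a' h => (Prod.mk.injEq _ _ _ _ ▸ h).1),
    Set.ncard_pair hne]

/-- counting incident pairs over a finite set of bonds: `2|T|`. -/
lemma pairs_ncard (T : Set (Sym2 (ℤ × ℤ))) (hT : T.Finite) :
    (∀ b ∈ T, isBond b) →
    {p : (ℤ × ℤ) × Sym2 (ℤ × ℤ) | p.2 ∈ T ∧ p.1 ∈ p.2}.Finite ∧
    {p : (ℤ × ℤ) × Sym2 (ℤ × ℤ) | p.2 ∈ T ∧ p.1 ∈ p.2}.ncard = 2 * T.ncard := by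
  refine Set.Finite.induction_on
    (motive := fun T _ => (∀ b ∈ T, isBond b) →
      {p : (ℤ × ℤ) × Sym2 (ℤ × ℤ) | p.2 ∈ T ∧ p.1 ∈ p.2}.Finite ∧
      {p : (ℤ × ℤ) × Sym2 (ℤ × ℤ) | p.2 ∈ T ∧ p.1 ∈ p.2}.ncard = 2 * T.ncard)
    T hT (by intro _; simp) ?_
  intro b T hbT hTfin ih hball
  obtain ⟨hfin, hcard⟩ := ih (fun b hb => hball b (Set.mem_insert_of_mem _ hb))
  have hb : isBond b := hball b (Set.mem_insert _ _)
  have hsplit : {p : (ℤ × ℤ) × Sym2 (ℤ × ℤ) | p.2 ∈ insert b T ∧ p.1 ∈ p.2} =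
      {p : (ℤ × ℤ) × Sym2 (ℤ × ℤ) | p.2 = b ∧ p.1 ∈ p.2} ∪
      {p : (ℤ × ℤ) × Sym2 (ℤ × ℤ) | p.2 ∈ T ∧ p.1 ∈ p.2} := by
    ext p; simp [Set.mem_insert_iff, or_and_right]
  have hdisj : Disjoint {p : (ℤ × ℤ) × Sym2 (ℤ × ℤ) | p.2 = b ∧ p.1 ∈ p.2}
      {p : (ℤ × ℤ) × Sym2 (ℤ × ℤ) | p.2 ∈ T ∧ p.1 ∈ p.2} := by
    rw [Set.disjoint_left]
    rintro p ⟨rfl, -⟩ ⟨hpT, -⟩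
    exact hbT hpT
  constructor
  · rw [hsplit]; exact (slice_finite hb).union hfin
  · rw [hsplit, Set.ncard_union_eq hdisj (slice_finite hb) hfin, slice_ncard hb, hcard,
      Set.ncard_insert_of_notMem hbT hTfin]
    ring

lemma nbhd_eq (v : ℤ × ℤ) :
    {w : ℤ × ℤ | latAdj v w} =
      {(v.1 + 1, v.2), (v.1 - 1, v.2), (v.1, v.2 + 1), (v.1, v.2 - 1)} := by
  ext ⟨a, b⟩
  simp only [latAdj, Set.mem_setOf_eq, Set.mem_insert_iff, Set.mem_singleton_iff, Prod.mk.injEq]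
  omega

lemma nbhd_finite (v : ℤ × ℤ) : {w : ℤ × ℤ | latAdj v w}.Finite := by
  rw [nbhd_eq]
  exact (((Set.finite_singleton _).insert _).insert _).insert _

lemma nbhd_ncard (v : ℤ × ℤ) : {w : ℤ × ℤ | latAdj v w}.ncard = 4 := by
  rw [nbhd_eq]
  rw [Set.ncard_insert_of_notMem (by simp [Prod.ext_iff]; try omega)
      (((Set.finite_singleton _).insert _).insert _),
    Set.ncard_insert_of_notMem (by simp [Prod.ext_iff]; try omega)
      ((Set.finite_singleton _).insert _),
    Set.ncard_insert_of_notMem (by simp [Prod.ext_iff]; try omega) (Set.finite_singleton _),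
    Set.ncard_singleton]

lemma bondsAt_eq (v : ℤ × ℤ) :
    {b : Sym2 (ℤ × ℤ) | isBond b ∧ v ∈ b} = (fun w => s(v, w)) '' {w : ℤ × ℤ | latAdj v w} := by
  ext b
  constructor
  · rintro ⟨⟨x, y, hadj, rfl⟩, hv⟩
    rcases Sym2.mem_iff.mp hv with rfl | rfl
    · exact ⟨y, hadj, rfl⟩
    · exact ⟨x, latAdj_symm hadj, Sym2.eq_swap⟩
  · rintro ⟨w, hw, rfl⟩
    exact ⟨⟨v, w, hw, rfl⟩, Sym2.mem_mk_left _ _⟩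

lemma bondsAt_finite (v : ℤ × ℤ) : {b : Sym2 (ℤ × ℤ) | isBond b ∧ v ∈ b}.Finite := by
  rw [bondsAt_eq]; exact (nbhd_finite v).image _

lemma bondsAt_ncard (v : ℤ × ℤ) : {b : Sym2 (ℤ × ℤ) | isBond b ∧ v ∈ b}.ncard = 4 := by
  rw [bondsAt_eq, Set.ncard_image_of_injOn _, nbhd_ncard]
  intro a ha b hb h
  rcases Sym2.eq_iff.mp h with ⟨-, h2⟩ | ⟨h1, h2⟩
  · exact h2
  · exact h2.trans h1

lemma vslice_eq (v : ℤ × ℤ) :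
    {p : (ℤ × ℤ) × Sym2 (ℤ × ℤ) | p.1 = v ∧ isBond p.2 ∧ p.1 ∈ p.2} =
      (fun b => (v, b)) '' {b : Sym2 (ℤ × ℤ) | isBond b ∧ v ∈ b} := by
  ext ⟨x, y⟩
  constructor
  · rintro ⟨rfl, h1, h2⟩; exact ⟨y, ⟨h1, h2⟩, rfl⟩
  · rintro ⟨b, ⟨h1, h2⟩, h⟩
    cases h
    exact ⟨rfl, h1, h2⟩

/-- counting incident pairs over a finite set of vertices: `4|V|`. -/
lemma vertex_ncard (V : Set (ℤ × ℤ)) (hV : V.Finite) :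
    {p : (ℤ × ℤ) × Sym2 (ℤ × ℤ) | p.1 ∈ V ∧ isBond p.2 ∧ p.1 ∈ p.2}.Finite ∧
    {p : (ℤ × ℤ) × Sym2 (ℤ × ℤ) | p.1 ∈ V ∧ isBond p.2 ∧ p.1 ∈ p.2}.ncard = 4 * V.ncard := by
  refine Set.Finite.induction_on
    (motive := fun V _ =>
      {p : (ℤ × ℤ) × Sym2 (ℤ × ℤ) | p.1 ∈ V ∧ isBond p.2 ∧ p.1 ∈ p.2}.Finite ∧
      {p : (ℤ × ℤ) × Sym2 (ℤ × ℤ) | p.1 ∈ V ∧ isBond p.2 ∧ p.1 ∈ p.2}.ncard = 4 * V.ncard)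
    V hV (by simp) ?_
  intro v V hvV hVfin ih
  obtain ⟨hfin, hcard⟩ := ih
  have hsl_fin : {p : (ℤ × ℤ) × Sym2 (ℤ × ℤ) | p.1 = v ∧ isBond p.2 ∧ p.1 ∈ p.2}.Finite := by
    rw [vslice_eq]; exact (bondsAt_finite v).image _
  have hsl_card : {p : (ℤ × ℤ) × Sym2 (ℤ × ℤ) | p.1 = v ∧ isBond p.2 ∧ p.1 ∈ p.2}.ncard = 4 := by
    rw [vslice_eq, Set.ncard_image_of_injective _ (fun a a' h => (Prod.mk.injEq _ _ _ _ ▸ h).2),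
      bondsAt_ncard]
  have hsplit : {p : (ℤ × ℤ) × Sym2 (ℤ × ℤ) | p.1 ∈ insert v V ∧ isBond p.2 ∧ p.1 ∈ p.2} =
      {p : (ℤ × ℤ) × Sym2 (ℤ × ℤ) | p.1 = v ∧ isBond p.2 ∧ p.1 ∈ p.2} ∪
      {p : (ℤ × ℤ) × Sym2 (ℤ × ℤ) | p.1 ∈ V ∧ isBond p.2 ∧ p.1 ∈ p.2} := by
    ext p; simp [Set.mem_insert_iff, or_and_right]
  have hdisj : Disjoint {p : (ℤ × ℤ) × Sym2 (ℤ × ℤ) | p.1 = v ∧ isBond p.2 ∧ p.1 ∈ p.2}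
      {p : (ℤ × ℤ) × Sym2 (ℤ × ℤ) | p.1 ∈ V ∧ isBond p.2 ∧ p.1 ∈ p.2} := by
    rw [Set.disjoint_left]
    rintro p ⟨rfl, -⟩ ⟨hpV, -⟩
    exact hvV hpV
  constructor
  · rw [hsplit]; exact hsl_fin.union hfin
  · rw [hsplit, Set.ncard_union_eq hdisj hsl_fin hfin, hsl_card, hcard,
      Set.ncard_insert_of_notMem hvV hVfin]
    ring

lemma latSq_finite (m : ℕ) : (latSq m).Finite := by
  apply Set.Finite.subset ((Set.finite_Icc (-(m : ℤ)) m).prod (Set.finite_Icc (-(m : ℤ)) m))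
  rintro ⟨a, b⟩ ⟨h1, h2⟩
  simp only [Set.mem_prod, Set.mem_Icc]
  constructor <;> [exact abs_le.mp h1; exact abs_le.mp h2]

lemma bonds_finite (m : ℕ) : (bonds m).Finite := by
  refine Set.Finite.subset (((latSq_finite m).prod (latSq_finite m)).image (Function.uncurry Sym2.mk)) ?_
  rintro e ⟨⟨v, w, hadj, rfl⟩, hmem⟩
  exact ⟨(v, w), ⟨hmem v (Sym2.mem_mk_left _ _), hmem w (Sym2.mem_mk_right _ _)⟩, rfl⟩

/-- adjacency moves a vertex at most one step. -/
lemma latAdj_latSq {m : ℕ} {a b : ℤ × ℤ} (h : latAdj a b) (ha : a ∈ latSq m) :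
    b ∈ latSq (m + 1) := by
  obtain ⟨h1, h2⟩ := ha
  rw [abs_le] at h1 h2
  rcases h with ⟨e1, e2⟩ | ⟨e1, e2⟩ <;>
    exact ⟨abs_le.mpr (by push_cast; omega), abs_le.mpr (by push_cast; omega)⟩

theorem stmt_13 (n : ℕ) (X : Set (Sym2 (ℤ × ℤ))) (hX : X ⊆ bonds n) :
    2 * ((bonds (n + 1) \ X).ncard : ℤ) =
      4 * (({v ∈ latSq (n + 1) | ∀ e ∈ X, v ∉ e}).ncard : ℤ) +
        (({p : (ℤ × ℤ) × Sym2 (ℤ × ℤ) |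
            p.2 ∈ bonds (n + 1) \ X ∧ p.1 ∈ p.2 ∧ ∃ e ∈ X, p.1 ∈ e}).ncard : ℤ) -
        (({p : (ℤ × ℤ) × Sym2 (ℤ × ℤ) |
            p.1 ∈ latSq (n + 1) ∧ isBond p.2 ∧ p.2 ∉ bonds (n + 1) ∧ p.1 ∈ p.2}).ncard : ℤ) := by
  set T := bonds (n + 1) \ X with hT
  set κ := {v ∈ latSq (n + 1) | ∀ e ∈ X, v ∉ e} with hκ
  set Γ := {p : (ℤ × ℤ) × Sym2 (ℤ × ℤ) | p.2 ∈ T ∧ p.1 ∈ p.2 ∧ ∃ e ∈ X, p.1 ∈ e} with hΓ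
  set D := {p : (ℤ × ℤ) × Sym2 (ℤ × ℤ) |
      p.1 ∈ latSq (n + 1) ∧ isBond p.2 ∧ p.2 ∉ bonds (n + 1) ∧ p.1 ∈ p.2} with hD
  set P₁ := {p : (ℤ × ℤ) × Sym2 (ℤ × ℤ) | p.1 ∈ κ ∧ p.2 ∈ bonds (n + 1) ∧ p.1 ∈ p.2} with hP₁
  have hTfin : T.Finite := (bonds_finite (n + 1)).subset Set.diff_subset
  have hTbond : ∀ b ∈ T, isBond b := fun b hb => hb.1.1
  have hκfin : κ.Finite := (latSq_finite (n + 1)).subset (fun v hv => hv.1)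
  obtain ⟨hPairs_fin, hPairs_card⟩ := pairs_ncard T hTfin hTbond
  obtain ⟨hFull_fin, hFull_card⟩ := vertex_ncard κ hκfin
  -- first split: Pairs = Γ ∪ P₁
  have hsplit1 : {p : (ℤ × ℤ) × Sym2 (ℤ × ℤ) | p.2 ∈ T ∧ p.1 ∈ p.2} = Γ ∪ P₁ := by
    ext ⟨i, b⟩
    simp only [hΓ, hP₁, hκ, Set.mem_setOf_eq, Set.mem_union, Set.mem_sep_iff]
    constructor
    · rintro ⟨hbT, hib⟩
      by_cases htouch : ∃ e ∈ X, i ∈ e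
      · exact Or.inl ⟨hbT, hib, htouch⟩
      · push_neg at htouch
        exact Or.inr ⟨⟨hbT.1.2 i hib, htouch⟩, hbT.1, hib⟩
    · rintro (⟨hbT, hib, -⟩ | ⟨⟨-, huntouch⟩, hbB, hib⟩)
      · exact ⟨hbT, hib⟩
      · exact ⟨⟨hbB, fun hbX => huntouch b hbX hib⟩, hib⟩
  have hdisj1 : Disjoint Γ P₁ := by
    rw [Set.disjoint_left]
    rintro ⟨i, b⟩ ⟨-, hib, e, heX, hie⟩ ⟨⟨-, huntouch⟩, -, -⟩
    exact huntouch e heX hie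
  -- second split: Full = P₁ ∪ D
  have hDP : D = {p : (ℤ × ℤ) × Sym2 (ℤ × ℤ) |
      p.1 ∈ κ ∧ isBond p.2 ∧ p.2 ∉ bonds (n + 1) ∧ p.1 ∈ p.2} := by
    ext ⟨i, b⟩
    simp only [hD, hκ, Set.mem_setOf_eq, Set.mem_sep_iff]
    constructor
    · rintro ⟨hiΛ, hbond, hbB, hib⟩
      refine ⟨⟨hiΛ, fun e heX hie => ?_⟩, hbond, hbB, hib⟩
      -- i touches X ⟹ i ∈ latSq n ⟹ b ∈ bonds (n+1), contradiction
      have hiN : i ∈ latSq n := (hX heX).2 i hie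
      apply hbB
      obtain ⟨x, y, hadj, rfl⟩ := hbond
      refine ⟨⟨x, y, hadj, rfl⟩, fun v hv => ?_⟩
      rcases Sym2.mem_iff.mp hib with rfl | rfl
      · rcases Sym2.mem_iff.mp hv with rfl | rfl
        · exact ⟨hiN.1.trans (by push_cast; omega), hiN.2.trans (by push_cast; omega)⟩
        · exact latAdj_latSq hadj hiN
      · rcases Sym2.mem_iff.mp hv with rfl | rfl
        · exact latAdj_latSq (latAdj_symm hadj) hiN
        · exact ⟨hiN.1.trans (by push_cast; omega), hiN.2.trans (by push_cast; omega)⟩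
    · rintro ⟨⟨hiΛ, -⟩, hbond, hbB, hib⟩
      exact ⟨hiΛ, hbond, hbB, hib⟩
  have hsplit2 : {p : (ℤ × ℤ) × Sym2 (ℤ × ℤ) | p.1 ∈ κ ∧ isBond p.2 ∧ p.1 ∈ p.2} = P₁ ∪ D := by
    rw [hDP]
    ext ⟨i, b⟩
    simp only [hP₁, Set.mem_setOf_eq, Set.mem_union]
    constructor
    · rintro ⟨hiκ, hbond, hib⟩
      by_cases hbB : b ∈ bonds (n + 1)
      · exact Or.inl ⟨hiκ, hbB, hib⟩
      · exact Or.inr ⟨hiκ, hbond, hbB, hib⟩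
    · rintro (⟨hiκ, hbB, hib⟩ | ⟨hiκ, hbond, -, hib⟩)
      · exact ⟨hiκ, hbB.1, hib⟩
      · exact ⟨hiκ, hbond, hib⟩
  have hdisj2 : Disjoint P₁ D := by
    rw [hDP, Set.disjoint_left]
    rintro ⟨i, b⟩ ⟨-, hbB, -⟩ ⟨-, -, hbB', -⟩
    exact hbB' hbB
  -- finiteness of the pieces
  have hΓfin : Γ.Finite := by
    apply hPairs_fin.subset
    rintro p ⟨h1, h2, -⟩; exact ⟨h1, h2⟩
  have hP₁fin : P₁.Finite := by
    apply hFull_fin.subset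
    rintro p ⟨h1, h2, h3⟩; exact ⟨h1, h2.1, h3⟩
  have hDfin : D.Finite := by
    rw [hDP]
    apply hFull_fin.subset
    rintro p ⟨h1, h2, -, h4⟩; exact ⟨h1, h2, h4⟩
  have e1 : 2 * T.ncard = Γ.ncard + P₁.ncard := by
    rw [← hPairs_card, hsplit1, Set.ncard_union_eq hdisj1 hΓfin hP₁fin]
  have e2 : 4 * κ.ncard = P₁.ncard + D.ncard := by
    rw [← hFull_card, hsplit2, Set.ncard_union_eq hdisj2 hP₁fin hDfin]
  omega
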